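/- Let Π be a reversible Markov kernel on (X,𝓔) with finite reversing measure m, and let κ be its Cheeger constant. If g ∈ L¹(X,m) takes values in [0,∞) and m({x : g(x) > 0}) ≤ m(X)/2, then 𝓔₁(g) ≥ κ·‖g‖_{m,1}. -/

import Mathlib

open MeasureTheory ProbabilityTheory ENNReal

noncomputable section

/-- The `m`-size of the boundary of `A` with respect to the Markov kernel `Π`:
`|∂_Π A|_m = ∫_A Π(x, X∖A) dm(x)`. -/
def boundarySize {X : Type*} [MeasurableSpace X] (K : Kernel X X) (m : Measure X)
    (A : Set X) : ℝ :=
  (∫⁻ x in A, K x Aᶜ ∂m).toReal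

/-- The Cheeger constant of the Markov kernel `Π` with respect to `m`:
`κ = inf { |∂_Π A|_m / m(A) : A measurable, 0 < m(A) ≤ m(X)/2 }`. -/
def cheegerConst {X : Type*} [MeasurableSpace X] (K : Kernel X X) (m : Measure X) : ℝ :=
  sInf { q : ℝ | ∃ A : Set X, MeasurableSet A ∧ 0 < m A ∧ m A ≤ m Set.univ / 2 ∧
    q = boundarySize K m A / (m A).toReal }

/-- The `2`-Dirichlet energy `𝓔₂(f) = (1/2) ∫_{X×X} |f(x) − f(y)|² dμ(x,y)` where
`μ = m ⊗ₘ Π` is the measure on `X × X` determined by `μ(A×B) = ∫_A Π(x,B) dm(x)`. -/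
def dirichletEnergy2 {X : Type*} [MeasurableSpace X] (K : Kernel X X) (m : Measure X)
    (f : X → ℝ) : ℝ :=
  (1 / 2) * ∫ p, (f p.1 - f p.2) ^ 2 ∂(m.compProd K)

namespace CheegerAux

/-- Co-area helper, case `b ≤ a`. -/
lemma aux0 {a b : ℝ} (hb : 0 ≤ b) (hba : b ≤ a) :
    ∫⁻ t in Set.Ioi (0:ℝ),
      ENNReal.ofReal |(if t < a then (1:ℝ) else 0) - (if t < b then 1 else 0)|
      = ENNReal.ofReal (a - b) := by
  have heq : ∀ t : ℝ,
      ENNReal.ofReal |(if t < a then (1:ℝ) else 0) - (if t < b then 1 else 0)|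
      = (Set.Ico b a).indicator (fun _ => (1:ℝ≥0∞)) t := by
    intro t
    by_cases h1 : t < b
    · have h2 : t < a := lt_of_lt_of_le h1 hba
      have : t ∉ Set.Ico b a := by simp [Set.mem_Ico, not_le.mpr h1]
      simp [h1, h2, Set.indicator_of_notMem this]
    · by_cases h2 : t < a
      · have : t ∈ Set.Ico b a := ⟨not_lt.mp h1, h2⟩
        simp [h1, h2, Set.indicator_of_mem this]
      · have : t ∉ Set.Ico b a := by simp [Set.mem_Ico, h2]
        simp [h1, h2, Set.indicator_of_notMem this]
  simp_rw [heq]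
  rw [lintegral_indicator measurableSet_Ico, setLIntegral_one,
    Measure.restrict_apply measurableSet_Ico]
  refine le_antisymm ?_ ?_
  · calc volume (Set.Ico b a ∩ Set.Ioi 0) ≤ volume (Set.Ico b a) :=
          measure_mono Set.inter_subset_left
      _ = ENNReal.ofReal (a - b) := Real.volume_Ico
  · calc ENNReal.ofReal (a - b) = volume (Set.Ioo b a) := Real.volume_Ioo.symm
      _ ≤ volume (Set.Ico b a ∩ Set.Ioi 0) := by
          refine measure_mono fun t ht => ⟨⟨le_of_lt ht.1, ht.2⟩, lt_of_le_of_lt hb ht.1⟩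

/-- Co-area helper: `|a - b| = ∫₀^∞ |1_{t<a} - 1_{t<b}| dt` for `a, b ≥ 0`. -/
lemma aux1 {a b : ℝ} (ha : 0 ≤ a) (hb : 0 ≤ b) :
    ∫⁻ t in Set.Ioi (0:ℝ),
      ENNReal.ofReal |(if t < a then (1:ℝ) else 0) - (if t < b then 1 else 0)|
      = ENNReal.ofReal |a - b| := by
  rcases le_total b a with h | h
  · rw [aux0 hb h, abs_of_nonneg (sub_nonneg.mpr h)]
  · have hsw : ∀ t : ℝ,
        |(if t < a then (1:ℝ) else 0) - (if t < b then 1 else 0)|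
        = |(if t < b then (1:ℝ) else 0) - (if t < a then 1 else 0)| :=
      fun t => abs_sub_comm _ _
    simp_rw [hsw]
    rw [aux0 ha h, abs_sub_comm, abs_of_nonneg (sub_nonneg.mpr h)]


variable {X : Type*} [MeasurableSpace X] (K : Kernel X X) [IsMarkovKernel K]
  (m : Measure X) [IsFiniteMeasure m]

/-- Reversibility in lintegral form on sets. -/
lemma rev_sets
    (hrev : ∀ f g : X → ℝ, Measurable f → Measurable g →
      (∃ C, ∀ x, |f x| ≤ C) → (∃ C, ∀ x, |g x| ≤ C) →
      ∫ x, f x * (∫ y, g y ∂(K x)) ∂m = ∫ x, (∫ y, f y ∂(K x)) * g x ∂m)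
    {A B : Set X} (hA : MeasurableSet A) (hB : MeasurableSet B) :
    ∫⁻ x in A, K x B ∂m = ∫⁻ x in B, K x A ∂m := by
  have hbnd : ∀ S : Set X, ∃ C, ∀ x, |S.indicator (fun _ => (1:ℝ)) x| ≤ C := by
    intro S
    refine ⟨1, fun x => ?_⟩
    by_cases hx : x ∈ S <;> simp [hx]
  have h := hrev (A.indicator fun _ => 1) (B.indicator fun _ => 1)
    (measurable_const.indicator hA) (measurable_const.indicator hB) (hbnd A) (hbnd B)
  have hKB : ∀ x, ∫ y, B.indicator (fun _ => (1:ℝ)) y ∂(K x) = (K x B).toReal := by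
    intro x; exact integral_indicator_one hB
  have hKA : ∀ x, ∫ y, A.indicator (fun _ => (1:ℝ)) y ∂(K x) = (K x A).toReal := by
    intro x; exact integral_indicator_one hA
  simp_rw [hKB, hKA] at h
  have hl : ∀ (S T : Set X), MeasurableSet S → MeasurableSet T →
      ∫ x, S.indicator (fun _ => (1:ℝ)) x * (K x T).toReal ∂m
      = (∫⁻ x in S, K x T ∂m).toReal := by
    intro S T hS hT
    have : ∀ x, S.indicator (fun _ => (1:ℝ)) x * (K x T).toReal
        = S.indicator (fun x => (K x T).toReal) x := by
      intro x; by_cases hx : x ∈ S <;> simp [hx]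
    simp_rw [this]
    rw [integral_indicator hS]
    exact integral_toReal ((K.measurable_coe hT).aemeasurable.restrict)
      (ae_of_all _ fun x => measure_lt_top _ _)
  have hfin : ∀ (S T : Set X), ∫⁻ x in S, K x T ∂m ≠ ∞ := by
    intro S T
    refine ne_of_lt (lt_of_le_of_lt ?_ (measure_lt_top m Set.univ))
    calc ∫⁻ x in S, K x T ∂m ≤ ∫⁻ _ in S, 1 ∂m :=
          lintegral_mono fun x => prob_le_one
      _ = m S := setLIntegral_one S
      _ ≤ m Set.univ := measure_mono (Set.subset_univ S)
  rw [hl A B hA hB] at h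
  have h2 : ∫ x, (K x A).toReal * B.indicator (fun _ => (1:ℝ)) x ∂m
      = (∫⁻ x in B, K x A ∂m).toReal := by
    simp_rw [mul_comm]
    exact hl B A hB hA
  rw [h2] at h
  exact (ENNReal.toReal_eq_toReal_iff' (hfin A B) (hfin B A)).mp h

/-- Invariance of `m` under `K`. -/
lemma invariant
    (hrev : ∀ f g : X → ℝ, Measurable f → Measurable g →
      (∃ C, ∀ x, |f x| ≤ C) → (∃ C, ∀ x, |g x| ≤ C) →
      ∫ x, f x * (∫ y, g y ∂(K x)) ∂m = ∫ x, (∫ y, f y ∂(K x)) * g x ∂m)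
    {B : Set X} (hB : MeasurableSet B) :
    ∫⁻ x, K x B ∂m = m B := by
  have := rev_sets K m hrev MeasurableSet.univ hB
  simp only [Measure.restrict_univ, measure_univ, setLIntegral_one] at this
  exact this

/-- Main inequality for a measurable nonnegative integrable function. -/
lemma core
    (hrev : ∀ f g : X → ℝ, Measurable f → Measurable g →
      (∃ C, ∀ x, |f x| ≤ C) → (∃ C, ∀ x, |g x| ≤ C) →
      ∫ x, f x * (∫ y, g y ∂(K x)) ∂m = ∫ x, (∫ y, f y ∂(K x)) * g x ∂m)
    (g : X → ℝ) (hgm : Measurable g) (hg : Integrable g m) (hg0 : ∀ x, 0 ≤ g x)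
    (hsupp : m {x | 0 < g x} ≤ m Set.univ / 2) :
    cheegerConst K m * ∫ x, g x ∂m ≤
      (1 / 2) * ∫ p, |g p.1 - g p.2| ∂(m.compProd K) := by
  classical
  set κ := cheegerConst K m with hκdef
  -- κ ≥ 0
  have hκ0 : 0 ≤ κ := by
    apply Real.sInf_nonneg
    rintro q ⟨A, -, -, -, rfl⟩
    exact div_nonneg ENNReal.toReal_nonneg ENNReal.toReal_nonneg
  set μ := m.compProd K with hμdef
  set A : ℝ → Set X := fun t => {x | t < g x} with hAdef
  have hA : ∀ t, MeasurableSet (A t) := fun t => measurableSet_lt measurable_const hgm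
  set G : ℝ≥0∞ := ∫⁻ x, ENNReal.ofReal (g x) ∂m with hGdef
  set L : ℝ≥0∞ := ∫⁻ p, ENNReal.ofReal |g p.1 - g p.2| ∂μ with hLdef
  have habs_meas : Measurable fun p : X × X => |g p.1 - g p.2| :=
    ((hgm.comp measurable_fst).sub (hgm.comp measurable_snd)).abs
  -- real integrals as toReal of lintegrals
  have hGreal : ∫ x, g x ∂m = G.toReal := by
    rw [integral_eq_lintegral_of_nonneg_ae (ae_of_all _ hg0) hgm.aestronglyMeasurable]
  have hLreal : ∫ p, |g p.1 - g p.2| ∂μ = L.toReal := by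
    rw [integral_eq_lintegral_of_nonneg_ae (ae_of_all _ fun p => abs_nonneg _)
      habs_meas.aestronglyMeasurable]
  have hGfin : G ≠ ∞ :=
    (lintegral_ofReal_ne_top_iff_integrable hgm.aestronglyMeasurable
      (ae_of_all _ hg0)).mpr hg
  -- m.bind K = m
  have hbind : m.bind K = m := by
    ext s hs
    rw [Measure.bind_apply hs (Kernel.measurable K).aemeasurable]
    exact invariant K m hrev hs
  -- marginals
  have hmarg1 : ∫⁻ p, ENNReal.ofReal (g p.1) ∂μ = G := by
    rw [hμdef, Measure.lintegral_compProd (f := fun p : X × X => ENNReal.ofReal (g p.1))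
      ((hgm.comp measurable_fst).ennreal_ofReal)]
    simp [lintegral_const, hGdef]
  have hmarg2 : ∫⁻ p, ENNReal.ofReal (g p.2) ∂μ = G := by
    rw [hμdef, Measure.lintegral_compProd (f := fun p : X × X => ENNReal.ofReal (g p.2))
      ((hgm.comp measurable_snd).ennreal_ofReal)]
    have := MeasureTheory.Measure.lintegral_bind (Kernel.measurable K).aemeasurable
      hgm.ennreal_ofReal.aemeasurable (m := m)
    rw [← this, hbind]
  have hLfin : L ≠ ∞ := by
    have hle : L ≤ ∫⁻ p, (ENNReal.ofReal (g p.1) + ENNReal.ofReal (g p.2)) ∂μ := by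
      refine lintegral_mono fun p => ?_
      rw [← ENNReal.ofReal_add (hg0 _) (hg0 _)]
      exact ENNReal.ofReal_le_ofReal ((abs_sub _ _).trans (by
        rw [abs_of_nonneg (hg0 _), abs_of_nonneg (hg0 _)]))
    rw [lintegral_add_left (μ := μ) (f := fun p : X × X => ENNReal.ofReal (g p.1)) ((hgm.comp measurable_fst).ennreal_ofReal),
      hmarg1, hmarg2] at hle
    exact ne_of_lt (lt_of_le_of_lt hle (by
      exact ENNReal.add_lt_top.mpr ⟨lt_top_iff_ne_top.mpr hGfin, lt_top_iff_ne_top.mpr hGfin⟩))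
  -- layer cake
  have hlayer : G = ∫⁻ t in Set.Ioi (0:ℝ), m (A t) := by
    rw [hGdef, lintegral_eq_lintegral_meas_lt m (ae_of_all _ hg0) hgm.aemeasurable]
  -- coarea identity for L
  set F : ℝ → X × X → ℝ≥0∞ := fun t p =>
    ENNReal.ofReal |(if t < g p.1 then (1:ℝ) else 0) - (if t < g p.2 then 1 else 0)| with hFdef
  have hFmeas : Measurable (Function.uncurry fun (p : X × X) (t : ℝ) => F t p) := by
    apply Measurable.ennreal_ofReal
    apply Measurable.abs
    apply Measurable.sub
    · exact Measurable.ite (measurableSet_lt measurable_snd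
        (hgm.comp (measurable_fst.fst))) measurable_const measurable_const
    · exact Measurable.ite (measurableSet_lt measurable_snd
        (hgm.comp (measurable_fst.snd))) measurable_const measurable_const
  have hcoarea : L = ∫⁻ t in Set.Ioi (0:ℝ), ∫⁻ p, F t p ∂μ := by
    have hpt : ∀ p : X × X, ENNReal.ofReal |g p.1 - g p.2|
        = ∫⁻ t in Set.Ioi (0:ℝ), F t p := fun p => (aux1 (hg0 _) (hg0 _)).symm
    rw [hLdef]
    simp_rw [hpt]
    exact lintegral_lintegral_swap hFmeas.aemeasurable
  -- inner integral: boundary of level sets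
  have hinner : ∀ t : ℝ, ∫⁻ p, F t p ∂μ = 2 * μ (A t ×ˢ (A t)ᶜ) := by
    intro t
    have hFind : F t = (A t ×ˢ (A t)ᶜ ∪ (A t)ᶜ ×ˢ A t).indicator (fun _ => (1:ℝ≥0∞)) := by
      funext p
      by_cases h1 : t < g p.1 <;> by_cases h2 : t < g p.2
      · have : p ∉ (A t ×ˢ (A t)ᶜ ∪ (A t)ᶜ ×ˢ A t) := by
          simp [A, Set.mem_prod, h1, h2]
        simp [F, h1, h2, Set.indicator_of_notMem this]
      · have : p ∈ (A t ×ˢ (A t)ᶜ ∪ (A t)ᶜ ×ˢ A t) := by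
          simp [A, Set.mem_prod, h1, h2]
        simp [F, h1, h2, Set.indicator_of_mem this]
      · have : p ∈ (A t ×ˢ (A t)ᶜ ∪ (A t)ᶜ ×ˢ A t) := by
          simp [A, Set.mem_prod, h1, h2]
        simp [F, h1, h2, Set.indicator_of_mem this]
      · have : p ∉ (A t ×ˢ (A t)ᶜ ∪ (A t)ᶜ ×ˢ A t) := by
          simp [A, Set.mem_prod, h1, h2]
        simp [F, h1, h2, Set.indicator_of_notMem this]
    rw [hFind, lintegral_indicator (((hA t).prod (hA t).compl).union
      ((hA t).compl.prod (hA t))), setLIntegral_one]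
    have hdisj : Disjoint (A t ×ˢ (A t)ᶜ) ((A t)ᶜ ×ˢ A t) := by
      refine Set.disjoint_left.mpr fun p hp hq => ?_
      exact hq.1 hp.1
    rw [measure_union hdisj ((hA t).compl.prod (hA t))]
    have hswap : μ ((A t)ᶜ ×ˢ A t) = μ (A t ×ˢ (A t)ᶜ) := by
      rw [hμdef, Measure.compProd_apply_prod (hA t).compl (hA t),
        Measure.compProd_apply_prod (hA t) (hA t).compl]
      exact rev_sets K m hrev (hA t).compl (hA t)
    rw [hswap, two_mul]
  -- Cheeger bound at each level
  have hcheeger : ∀ t ∈ Set.Ioi (0:ℝ),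
      ENNReal.ofReal κ * m (A t) ≤ μ (A t ×ˢ (A t)ᶜ) := by
    intro t ht
    have hrect : μ (A t ×ˢ (A t)ᶜ) = ∫⁻ x in A t, K x (A t)ᶜ ∂m := by
      rw [hμdef]; exact Measure.compProd_apply_prod (hA t) (hA t).compl
    by_cases hm0 : m (A t) = 0
    · rw [hm0, mul_zero]; exact zero_le
    · have hAsub : A t ⊆ {x | 0 < g x} := fun x hx =>
        lt_trans (Set.mem_Ioi.mp ht) hx
      have hle2 : m (A t) ≤ m Set.univ / 2 :=
        le_trans (measure_mono hAsub) hsupp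
      have hκle : κ ≤ boundarySize K m (A t) / (m (A t)).toReal := by
        apply csInf_le
        · refine ⟨0, fun q hq => ?_⟩
          obtain ⟨B, -, -, -, rfl⟩ := hq
          exact div_nonneg ENNReal.toReal_nonneg ENNReal.toReal_nonneg
        · exact ⟨A t, hA t, pos_iff_ne_zero.mpr hm0, hle2, rfl⟩
      have hmpos : 0 < (m (A t)).toReal :=
        ENNReal.toReal_pos hm0 (measure_ne_top m _)
      have hmul : κ * (m (A t)).toReal ≤ boundarySize K m (A t) :=
        (le_div_iff₀ hmpos).mp hκle
      have hbfin : ∫⁻ x in A t, K x (A t)ᶜ ∂m ≠ ∞ := by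
        refine ne_of_lt (lt_of_le_of_lt ?_ (measure_lt_top m Set.univ))
        calc ∫⁻ x in A t, K x (A t)ᶜ ∂m ≤ ∫⁻ _ in A t, 1 ∂m :=
              lintegral_mono fun x => prob_le_one
          _ = m (A t) := setLIntegral_one _
          _ ≤ m Set.univ := measure_mono (Set.subset_univ _)
      calc ENNReal.ofReal κ * m (A t)
          = ENNReal.ofReal (κ * (m (A t)).toReal) := by
            rw [ENNReal.ofReal_mul hκ0, ENNReal.ofReal_toReal (measure_ne_top m _)]
        _ ≤ ENNReal.ofReal (boundarySize K m (A t)) := ENNReal.ofReal_le_ofReal hmul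
        _ = ∫⁻ x in A t, K x (A t)ᶜ ∂m := by
            rw [boundarySize, ENNReal.ofReal_toReal hbfin]
        _ = μ (A t ×ˢ (A t)ᶜ) := hrect.symm
  -- put it together in ℝ≥0∞
  set T : ℝ≥0∞ := ∫⁻ t in Set.Ioi (0:ℝ), μ (A t ×ˢ (A t)ᶜ) with hTdef
  have hLT : L = 2 * T := by
    rw [hcoarea]
    simp_rw [hinner]
    rw [lintegral_const_mul' 2 _ (by norm_num)]
  have hmain : ENNReal.ofReal κ * G ≤ T := by
    rw [hlayer, ← lintegral_const_mul' _ _ ENNReal.ofReal_ne_top]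
    refine lintegral_mono_ae ((ae_restrict_iff' measurableSet_Ioi).mpr
      (ae_of_all _ hcheeger))
  -- back to ℝ
  have hTfin : T ≠ ∞ := by
    intro hT
    rw [hLT, hT, ENNReal.mul_top (by norm_num)] at hLfin
    exact hLfin rfl
  have hfinal : κ * G.toReal ≤ T.toReal := by
    have := ENNReal.toReal_mono hTfin hmain
    rwa [ENNReal.toReal_mul, ENNReal.toReal_ofReal hκ0] at this
  rw [hGreal, hLreal, hLT, ENNReal.toReal_mul]
  have h2 : (2:ℝ≥0∞).toReal = 2 := by simp
  rw [h2]
  linarith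


end CheegerAux

/-- **Lemma 3.5.** Let `K` be a reversible Markov kernel on `X` with finite
reversing measure `m` and Cheeger constant `κ`. If `g ∈ L¹(X,m)` takes values in `[0,∞)`
and `m({g > 0}) ≤ m(X)/2`, then `𝓔₁(g) ≥ κ·‖g‖_{m,1}`. -/
theorem dirichlet_one_ge_cheeger {X : Type*} [MeasurableSpace X]
    (K : Kernel X X) [IsMarkovKernel K] (m : Measure X) [IsFiniteMeasure m]
    (hrev : ∀ f g : X → ℝ, Measurable f → Measurable g →
      (∃ C, ∀ x, |f x| ≤ C) → (∃ C, ∀ x, |g x| ≤ C) →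
      ∫ x, f x * (∫ y, g y ∂(K x)) ∂m = ∫ x, (∫ y, f y ∂(K x)) * g x ∂m)
    (g : X → ℝ) (hg : Integrable g m) (hg0 : ∀ x, 0 ≤ g x)
    (hsupp : m {x | 0 < g x} ≤ m Set.univ / 2) :
    cheegerConst K m * ∫ x, g x ∂m ≤
      (1 / 2) * ∫ p, |g p.1 - g p.2| ∂(m.compProd K) := by
  classical
  have hsm := hg.1
  set g' : X → ℝ := fun x => max (hsm.mk g x) 0 with hg'def
  have hg'm : Measurable g' := hsm.measurable_mk.max measurable_const
  have hgg' : g =ᵐ[m] g' := by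
    filter_upwards [hsm.ae_eq_mk] with x hx
    rw [hg'def]; dsimp only; rw [← hx, max_eq_left (hg0 x)]
  have hg' : Integrable g' m := hg.congr hgg'
  -- transfer the support bound
  have hsupp' : m {x | 0 < g' x} ≤ m Set.univ / 2 := by
    have hset : ({x | 0 < g' x} : Set X) =ᵐ[m] ({x | 0 < g x} : Set X) := by
      filter_upwards [hgg'] with x hx
      show (0 < g' x) = (0 < g x)
      rw [hx]
    calc m {x | 0 < g' x} = m {x | 0 < g x} := measure_congr hset
      _ ≤ m Set.univ / 2 := hsupp
  -- transfer the double integral via a μ-null set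
  set N : Set X := toMeasurable m {x | g x ≠ g' x} with hNdef
  have hNmeas : MeasurableSet N := measurableSet_toMeasurable _ _
  have hN0 : m N = 0 := by
    rw [hNdef, measure_toMeasurable]
    exact hgg'
  have h1 : (m.compProd K) (N ×ˢ Set.univ) = 0 := by
    rw [Measure.compProd_apply_prod hNmeas MeasurableSet.univ]
    simp [measure_univ, setLIntegral_one, hN0]
  have h2 : (m.compProd K) (Set.univ ×ˢ N) = 0 := by
    rw [Measure.compProd_apply_prod MeasurableSet.univ hNmeas, Measure.restrict_univ,
      CheegerAux.invariant K m hrev hNmeas, hN0]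
  have hae : (fun p : X × X => |g p.1 - g p.2|) =ᵐ[m.compProd K]
      fun p => |g' p.1 - g' p.2| := by
    rw [Filter.EventuallyEq, ae_iff]
    refine measure_mono_null (t := N ×ˢ Set.univ ∪ Set.univ ×ˢ N) (fun p hp => ?_) ?_
    · by_contra hcon
      simp only [Set.mem_union, Set.mem_prod, Set.mem_univ, and_true, true_and,
        not_or] at hcon
      obtain ⟨hp1, hp2⟩ := hcon
      have e1 : g p.1 = g' p.1 := by
        by_contra h; exact hp1 (subset_toMeasurable m _ h)
      have e2 : g p.2 = g' p.2 := by
        by_contra h; exact hp2 (subset_toMeasurable m _ h)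
      exact hp (show |g p.1 - g p.2| = |g' p.1 - g' p.2| by rw [e1, e2])
    · exact le_antisymm (le_trans (measure_union_le _ _) (by rw [h1, h2]; simp))
        zero_le
  rw [integral_congr_ae hgg', integral_congr_ae hae]
  exact CheegerAux.core K m hrev g' hg'm hg' (fun x => le_max_right _ _) hsupp'
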